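/- For the Laplacian matrix of a weighted directed graph, zero is a simple eigenvalue (has algebraic multiplicity one) if and only if the graph contains a directed spanning tree. -/

import Mathlib

open Matrix Polynomial Finset

namespace Stmt1Aux

variable {n : ℕ}
variable {ι : Type*} [Fintype ι] [DecidableEq ι]
set_option linter.unusedSectionVars false


variable {n : ℕ}

def redM (L : Matrix (Fin (n+1)) (Fin (n+1)) ℝ) : Matrix (Fin n) (Fin n) ℝ :=
  Matrix.of fun i j => L i.succ j.succ - L 0 j.succ

noncomputable def Umat (n : ℕ) : Matrix (Fin (n+1)) (Fin (n+1)) (Polynomial ℝ) :=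
  Matrix.of fun i j => if j = 0 then 1 else if i = j then 1 else 0

noncomputable def Vmat (n : ℕ) : Matrix (Fin (n+1)) (Fin (n+1)) (Polynomial ℝ) :=
  Matrix.of fun i j => if i = j then 1 else if j = 0 then -1 else 0

lemma det_Umat : (Umat n).det = 1 := by
  rw [Matrix.det_of_lowerTriangular (Umat n) ?_]
  · simp [Umat]
  · intro i j h
    have hij : i < j := h
    have hj0 : j ≠ 0 := by
      intro hj; subst hj; exact absurd hij (by simp [Fin.le_zero_iff])
    simp [Umat, hj0, hij.ne]

lemma det_Vmat : (Vmat n).det = 1 := by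
  rw [Matrix.det_of_lowerTriangular (Vmat n) ?_]
  · simp [Vmat]
  · intro i j h
    have hij : i < j := h
    have hj0 : j ≠ 0 := by
      intro hj; subst hj; exact absurd hij (by simp [Fin.le_zero_iff])
    simp [Vmat, hj0, hij.ne]

lemma charpoly_factor (L : Matrix (Fin (n+1)) (Fin (n+1)) ℝ)
    (hrow : ∀ i, ∑ j, L i j = 0) :
    L.charpoly = X * (redM L).charpoly := by
  classical
  set A := charmatrix L with hA
  have hsum : ∀ i, ∑ j, A i j = (X : Polynomial ℝ) := by
    intro i
    have h1 : ∀ j, A i j = (if i = j then (X : Polynomial ℝ) else 0) - C (L i j) := by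
      intro j
      by_cases h : i = j
      · subst h; rw [hA, charmatrix_apply_eq]; simp
      · rw [hA, charmatrix_apply_ne _ _ _ h]; simp [h]
    simp only [h1]
    rw [Finset.sum_sub_distrib, ← map_sum, hrow, map_zero, sub_zero]
    simp
  have hW : ∀ i j, (A * Umat n) i j = if j = 0 then X else A i j := by
    intro i j
    rw [Matrix.mul_apply]
    by_cases hj : j = 0
    · subst hj
      have h2 : (∑ x, A i x * Umat n x 0) = ∑ x, A i x :=
        Finset.sum_congr rfl (fun x _ => by simp [Umat])
      rw [h2, if_pos rfl]
      exact hsum i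
    · rw [if_neg hj]
      rw [Finset.sum_eq_single j (fun k _ hk => by simp [Umat, hj, hk]) (by simp)]
      simp [Umat, hj]
  have hB : ∀ i j, (Vmat n * (A * Umat n)) i j =
      if i = 0 then (if j = 0 then X else A 0 j)
      else (if j = 0 then 0 else A i j - A 0 j) := by
    intro i j
    rw [Matrix.mul_apply]
    by_cases hi : i = 0
    · subst hi
      rw [Finset.sum_eq_single 0 (fun k _ hk => by simp [Vmat, hk, hk.symm]) (by simp)]
      simp [Vmat, hW]
    · have hVik : ∀ k, Vmat n i k =
          (if i = k then 1 else 0) + (if k = 0 then -1 else 0) := by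
        intro k
        by_cases h1 : i = k
        · subst h1; simp [Vmat, hi]
        · by_cases h2 : k = 0 <;> simp [Vmat, h1, h2, hi]
      simp only [hVik, add_mul, Finset.sum_add_distrib]
      rw [Finset.sum_eq_single i (fun k _ hk => by simp [hk.symm]) (by simp),
        Finset.sum_eq_single (0 : Fin (n+1)) (fun k _ hk => by simp [hk]) (by simp)]
      simp only [if_pos rfl, one_mul, if_neg hi, neg_one_mul]
      rw [hW, hW]
      by_cases hj : j = 0 <;> simp [hj, sub_eq_add_neg]
  have hdet : A.det = (Vmat n * (A * Umat n)).det := by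
    rw [Matrix.det_mul, Matrix.det_mul, det_Umat, det_Vmat, one_mul, mul_one]
  have hsub : (Vmat n * (A * Umat n)).submatrix Fin.succ Fin.succ
      = charmatrix (redM L) := by
    ext i j
    rw [Matrix.submatrix_apply, hB]
    rw [if_neg (Fin.succ_ne_zero i), if_neg (Fin.succ_ne_zero j)]
    by_cases h : i = j
    · subst h
      rw [charmatrix_apply_eq, hA, charmatrix_apply_eq,
        charmatrix_apply_ne _ _ _ (Ne.symm (Fin.succ_ne_zero i))]
      simp only [redM, Matrix.of_apply, map_sub]
      ring
    · have hs : i.succ ≠ j.succ := fun hc => h (Fin.succ_injective n hc)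
      rw [charmatrix_apply_ne _ _ _ h, hA, charmatrix_apply_ne _ _ _ hs,
        charmatrix_apply_ne _ _ _ (Ne.symm (Fin.succ_ne_zero j))]
      simp only [redM, Matrix.of_apply, map_sub]
      ring
  have hexp : (Vmat n * (A * Umat n)).det = X * (redM L).charpoly := by
    rw [Matrix.det_succ_column_zero]
    rw [Finset.sum_eq_single 0 (fun k _ hk => by rw [hB]; simp [hk]) (by simp)]
    rw [hB]
    simp only [if_pos rfl, Fin.val_zero, pow_zero, one_mul, Fin.succAbove_zero]
    rw [hsub]
    rfl
  rw [Matrix.charpoly, ← hA, hdet, hexp]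







lemma mulVec_eq_sum (L : Matrix ι ι ℝ) (hrow : ∀ i, ∑ j, L i j = 0)
    (y : ι → ℝ) (i : ι) : L.mulVec y i = ∑ k, L i k * (y k - y i) := by
  simp only [mul_sub, Finset.sum_sub_distrib, ← Finset.sum_mul, hrow i, zero_mul, sub_zero]
  rfl

lemma term_nonneg (L : Matrix ι ι ℝ) (hoff : ∀ i j, i ≠ j → L i j ≤ 0)
    (y : ι → ℝ) (i : ι) (hmax : ∀ k, y k ≤ y i) (k : ι) :
    0 ≤ L i k * (y k - y i) := by
  by_cases h : i = k
  · subst h; simp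
  · nlinarith [hoff i k h, hmax k]

lemma maxprop (L : Matrix ι ι ℝ) (hrow : ∀ i, ∑ j, L i j = 0)
    (hoff : ∀ i j, i ≠ j → L i j ≤ 0) (y : ι → ℝ) (hy : L.mulVec y = 0)
    (i : ι) (hmax : ∀ k, y k ≤ y i) (j : ι) (hij : L i j < 0) : y j = y i := by
  have h0 : ∑ k, L i k * (y k - y i) = 0 := by
    rw [← mulVec_eq_sum L hrow, hy]; rfl
  have hterm := (Finset.sum_eq_zero_iff_of_nonneg
    (fun k _ => term_nonneg L hoff y i hmax k)).mp h0 j (mem_univ j)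
  rcases mul_eq_zero.mp hterm with h | h
  · exact absurd h hij.ne
  · linarith [sub_eq_zero.mp h]

lemma le_root [Nonempty ι] (L : Matrix ι ι ℝ) (hrow : ∀ i, ∑ j, L i j = 0)
    (hoff : ∀ i j, i ≠ j → L i j ≤ 0) (r : ι)
    (hr : ∀ j, Relation.ReflTransGen (fun a b => a ≠ b ∧ L b a < 0) r j)
    (y : ι → ℝ) (hy : L.mulVec y = 0) : ∀ i, y i ≤ y r := by
  obtain ⟨m, hm⟩ := Finite.exists_max y
  have key : ∀ v, Relation.ReflTransGen (fun a b => a ≠ b ∧ L b a < 0) r v →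
      y v = y m → y r = y m := by
    intro v hv
    induction hv with
    | refl => exact id
    | tail hab hbc ih =>
      intro hc
      apply ih
      have hmax : ∀ k, y k ≤ y _ := fun k => hc ▸ hm k
      have := maxprop L hrow hoff y hy _ hmax _ hbc.2
      rw [this, hc]
  have hrm : y r = y m := key m (hr m) rfl
  intro i; rw [hrm]; exact hm i

lemma const_of_root [Nonempty ι] (L : Matrix ι ι ℝ) (hrow : ∀ i, ∑ j, L i j = 0)
    (hoff : ∀ i j, i ≠ j → L i j ≤ 0) (r : ι)
    (hr : ∀ j, Relation.ReflTransGen (fun a b => a ≠ b ∧ L b a < 0) r j)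
    (y : ι → ℝ) (hy : L.mulVec y = 0) : ∀ i, y i = y r := by
  have h1 := le_root L hrow hoff r hr y hy
  have hyneg : L.mulVec (fun k => - y k) = 0 := by
    have : (fun k => - y k) = -y := rfl
    rw [this, Matrix.mulVec_neg, hy, neg_zero]
  have h2 := le_root L hrow hoff r hr (fun k => - y k) hyneg
  intro i
  have h2i : - y i ≤ - y r := h2 i
  have h1i := h1 i
  linarith

lemma det_redM_ne_zero (L : Matrix (Fin (n+1)) (Fin (n+1)) ℝ)
    (hrow : ∀ i, ∑ j, L i j = 0) (hoff : ∀ i j, i ≠ j → L i j ≤ 0) (r : Fin (n+1))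
    (hr : ∀ j, Relation.ReflTransGen (fun a b => a ≠ b ∧ L b a < 0) r j) :
    (redM L).det ≠ 0 := by
  intro hdet
  obtain ⟨v, hv0, hv⟩ := Matrix.exists_mulVec_eq_zero_iff.mpr hdet
  set y : Fin (n+1) → ℝ := Fin.cases 0 v with hydef
  have hy0 : y 0 = 0 := rfl
  have hys : ∀ j : Fin n, y j.succ = v j := fun j => by simp [hydef]
  have hL : ∀ w : Fin (n+1), L.mulVec y w = ∑ j : Fin n, L w j.succ * v j := by
    intro w
    show ∑ k, L w k * y k = _
    rw [Fin.sum_univ_succ]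
    simp [hy0, hys]
  have hconst : ∀ i, L.mulVec y i = L.mulVec y 0 := by
    intro i
    induction i using Fin.cases with
    | zero => rfl
    | succ i =>
      have hvi : (redM L).mulVec v i = 0 := congrFun hv i
      have hexp : (redM L).mulVec v i
          = (∑ j : Fin n, L i.succ j.succ * v j) - ∑ j : Fin n, L 0 j.succ * v j := by
        show ∑ j, (L i.succ j.succ - L 0 j.succ) * v j = _
        rw [← Finset.sum_sub_distrib]
        exact Finset.sum_congr rfl (fun j _ => by ring)
      rw [hL, hL]
      rw [hexp] at hvi
      linarith
  have hc0 : L.mulVec y 0 = 0 := by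
    obtain ⟨mx, hmx⟩ := Finite.exists_max y
    obtain ⟨mn, hmn⟩ := Finite.exists_max (fun i => - y i)
    have h1 : 0 ≤ L.mulVec y 0 := by
      rw [← hconst mx, mulVec_eq_sum L hrow]
      exact Finset.sum_nonneg (fun k _ => term_nonneg L hoff y mx hmx k)
    have h2 : L.mulVec y 0 ≤ 0 := by
      rw [← hconst mn, mulVec_eq_sum L hrow]
      apply Finset.sum_nonpos
      intro k _
      by_cases h : mn = k
      · subst h; simp
      · have hk := hmn k
        have := hoff mn k h
        have hge : y mn ≤ y k := by simpa using hk
        nlinarith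
    linarith
  have hy_all : L.mulVec y = 0 := funext fun i => (hconst i).trans hc0
  have hcst := const_of_root L hrow hoff r hr y hy_all
  have hr0 : y r = 0 := by rw [← hcst 0, hy0]
  apply hv0
  funext j
  show v j = 0
  rw [← hys j, hcst j.succ, hr0]







lemma left_null_of_closed (L : Matrix ι ι ℝ) (hrow : ∀ i, ∑ j, L i j = 0)
    (S : Finset ι) (hSne : S.Nonempty)
    (hcl : ∀ i ∈ S, ∀ j, j ∉ S → L i j = 0) :
    ∃ z : ι → ℝ, z ≠ 0 ∧ (∀ i, i ∉ S → z i = 0) ∧ z ᵥ* L = 0 := by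
  classical
  set L' : Matrix S S ℝ := Matrix.of (fun i j => L i j) with hL'
  have hsub : ∀ i : S, ∑ j : S, L' i j = 0 := by
    intro i
    have h1 : ∑ j : S, L (i : ι) (j : ι) = ∑ j ∈ S, L i j :=
      Finset.sum_coe_sort S (fun j => L i j)
    have h2 : ∑ j ∈ S, L (i : ι) j = ∑ j, L i j :=
      Finset.sum_subset (Finset.subset_univ S) (fun j _ hj => hcl i i.2 j hj)
    show ∑ j : S, L (i : ι) (j : ι) = 0
    rw [h1, h2, hrow]
  have : Nonempty S := ⟨⟨hSne.choose, hSne.choose_spec⟩⟩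
  have hdet' : L'.det = 0 := by
    refine Matrix.exists_mulVec_eq_zero_iff.mp ⟨fun _ => 1, ?_, ?_⟩
    · intro h
      exact one_ne_zero (congrFun h (Classical.arbitrary _))
    · funext i
      show ∑ j, L' i j * 1 = 0
      simp only [mul_one]
      exact hsub i
  obtain ⟨w, hw0, hw⟩ := Matrix.exists_vecMul_eq_zero_iff.mpr hdet'
  refine ⟨fun i => if h : i ∈ S then w ⟨i, h⟩ else 0, ?_, ?_, ?_⟩
  · intro h
    apply hw0
    funext j
    have hj := congrFun h (j : ι)
    simpa [j.2] using hj
  · intro i hi; simp [hi]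
  · funext j
    show ∑ i, (if h : i ∈ S then w ⟨i, h⟩ else 0) * L i j = 0
    have h1 : ∑ i, (if h : i ∈ S then w ⟨i, h⟩ else 0) * L i j
        = ∑ i ∈ S, (if h : i ∈ S then w ⟨i, h⟩ else 0) * L i j :=
      (Finset.sum_subset (Finset.subset_univ S) (fun i _ hi => by simp [hi])).symm
    rw [h1, ← Finset.sum_coe_sort S
      (fun i => (if h : i ∈ S then w ⟨i, h⟩ else 0) * L i j)]
    by_cases hj : j ∈ S
    · have hwj := congrFun hw ⟨j, hj⟩
      have : ∑ i : S, w i * L' i (⟨j, hj⟩ : S) = 0 := hwj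
      rw [← this]
      exact Finset.sum_congr rfl (fun i _ => by simp [i.2, hL'])
    · apply Finset.sum_eq_zero
      intro i _
      rw [hcl i i.2 j hj, mul_zero]

lemma vecMul_redM_zero (L : Matrix (Fin (n+1)) (Fin (n+1)) ℝ)
    (z : Fin (n+1) → ℝ) (hz0 : z ≠ 0) (hzL : z ᵥ* L = 0) (hzsum : ∑ i, z i = 0) :
    (redM L).det = 0 := by
  apply Matrix.exists_vecMul_eq_zero_iff.mp
  refine ⟨fun i => z i.succ, ?_, ?_⟩
  · intro h0
    have hzs : ∀ j : Fin n, z j.succ = 0 := fun j => congrFun h0 j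
    have hz00 : z 0 = 0 := by
      have := hzsum
      rw [Fin.sum_univ_succ] at this
      simpa [hzs] using this
    apply hz0
    funext i
    induction i using Fin.cases with
    | zero => exact hz00
    | succ i => exact hzs i
  · funext j
    show ∑ i : Fin n, z i.succ * (redM L) i j = 0
    have hs : ∑ i : Fin n, z i.succ = - z 0 := by
      rw [Fin.sum_univ_succ] at hzsum
      linarith
    have hzj : ∑ k, z k * L k j.succ = 0 := congrFun hzL j.succ
    rw [Fin.sum_univ_succ] at hzj
    have hexp : ∑ i : Fin n, z i.succ * (redM L) i j
        = (∑ i : Fin n, z i.succ * L i.succ j.succ)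
          - (∑ i : Fin n, z i.succ) * L 0 j.succ := by
      rw [Finset.sum_mul, ← Finset.sum_sub_distrib]
      exact Finset.sum_congr rfl (fun i _ => by show z i.succ * (L i.succ j.succ - L 0 j.succ) = _; ring)
    rw [hexp, hs]
    linarith

lemma det_redM_eq_zero (L : Matrix (Fin (n+1)) (Fin (n+1)) ℝ)
    (hrow : ∀ i, ∑ j, L i j = 0) (hoff : ∀ i j, i ≠ j → L i j ≤ 0)
    (h : ¬ ∃ r : Fin (n+1), ∀ j, Relation.ReflTransGen (fun a b => a ≠ b ∧ L b a < 0) r j) :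
    (redM L).det = 0 := by
  classical
  set rel : Fin (n+1) → Fin (n+1) → Prop := fun a b => a ≠ b ∧ L b a < 0 with hrel
  have hcommon : ¬ ∀ v w : Fin (n+1), ∃ u, Relation.ReflTransGen rel u v ∧
      Relation.ReflTransGen rel u w := by
    intro hvw
    apply h
    have key : ∀ s : Finset (Fin (n+1)), ∃ u, ∀ j ∈ s, Relation.ReflTransGen rel u j := by
      intro s
      induction s using Finset.induction_on with
      | empty => exact ⟨0, by simp⟩
      | insert a s' ha ih =>
        obtain ⟨u, hu⟩ := ih
        obtain ⟨u', h1, h2⟩ := hvw u a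
        refine ⟨u', fun j hj => ?_⟩
        rcases Finset.mem_insert.mp hj with hja | hjs
        · subst hja; exact h2
        · exact h1.trans (hu j hjs)
    obtain ⟨u, hu⟩ := key Finset.univ
    exact ⟨u, fun j => hu j (Finset.mem_univ j)⟩
  push_neg at hcommon
  obtain ⟨v, w, hvw⟩ := hcommon
  set S1 : Finset (Fin (n+1)) := Finset.univ.filter (fun u => Relation.ReflTransGen rel u v)
    with hS1
  set S2 : Finset (Fin (n+1)) := Finset.univ.filter (fun u => Relation.ReflTransGen rel u w)
    with hS2
  have hmem1 : ∀ u, u ∈ S1 ↔ Relation.ReflTransGen rel u v := by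
    intro u; simp [hS1]
  have hmem2 : ∀ u, u ∈ S2 ↔ Relation.ReflTransGen rel u w := by
    intro u; simp [hS2]
  have hcl : ∀ (S : Finset (Fin (n+1))) (t : Fin (n+1)),
      (∀ u, u ∈ S ↔ Relation.ReflTransGen rel u t) →
      ∀ i ∈ S, ∀ j, j ∉ S → L i j = 0 := by
    intro S t hmem i hi j hj
    by_contra hne
    have hji : j ≠ i := by rintro rfl; exact hj hi
    have hlt : L i j < 0 := lt_of_le_of_ne (hoff i j (Ne.symm hji)) hne
    apply hj
    rw [hmem]
    exact (Relation.ReflTransGen.single ⟨hji, hlt⟩).trans ((hmem i).mp hi)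
  obtain ⟨z1, hz10, hz1S, hz1L⟩ := left_null_of_closed L hrow S1
    ⟨v, (hmem1 v).mpr Relation.ReflTransGen.refl⟩ (hcl S1 v hmem1)
  obtain ⟨z2, hz20, hz2S, hz2L⟩ := left_null_of_closed L hrow S2
    ⟨w, (hmem2 w).mpr Relation.ReflTransGen.refl⟩ (hcl S2 w hmem2)
  by_cases h1 : ∑ i, z1 i = 0
  · exact vecMul_redM_zero L z1 hz10 hz1L h1
  by_cases h2 : ∑ i, z2 i = 0
  · exact vecMul_redM_zero L z2 hz20 hz2L h2
  · set z : Fin (n+1) → ℝ := fun i => (∑ k, z2 k) * z1 i - (∑ k, z1 k) * z2 i with hz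
    have hdisj : ∀ u, u ∈ S1 → u ∉ S2 := by
      intro u hu1 hu2
      exact hvw u ((hmem1 u).mp hu1) ((hmem2 u).mp hu2)
    apply vecMul_redM_zero L z
    · obtain ⟨i, hi⟩ : ∃ i, z1 i ≠ 0 := by
        by_contra hc; push_neg at hc; exact hz10 (funext hc)
      have hiS1 : i ∈ S1 := by by_contra hiS; exact hi (hz1S i hiS)
      have hz2i : z2 i = 0 := hz2S i (hdisj i hiS1)
      intro hzz
      have := congrFun hzz i
      rw [hz] at this
      simp only [hz2i, mul_zero, sub_zero] at this
      exact h2 (by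
        rcases mul_eq_zero.mp this with hc | hc
        · exact hc
        · exact absurd hc hi)
    · funext j
      show ∑ i, z i * L i j = 0
      have e1 : ∑ i, z1 i * L i j = 0 := congrFun hz1L j
      have e2 : ∑ i, z2 i * L i j = 0 := congrFun hz2L j
      have : ∑ i, z i * L i j = (∑ k, z2 k) * (∑ i, z1 i * L i j)
          - (∑ k, z1 k) * (∑ i, z2 i * L i j) := by
        rw [Finset.mul_sum, Finset.mul_sum, ← Finset.sum_sub_distrib]
        exact Finset.sum_congr rfl (fun i _ => by rw [hz]; ring)
      rw [this, e1, e2]; ring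
    · have : ∑ i, z i = (∑ k, z2 k) * (∑ i, z1 i) - (∑ k, z1 k) * (∑ i, z2 i) := by
        rw [Finset.mul_sum, Finset.mul_sum, ← Finset.sum_sub_distrib]
      rw [this]; ring


end Stmt1Aux

/-- For the Laplacian matrix of a weighted directed graph (zero row sums,
nonpositive off-diagonal entries, with an edge (j,i) exactly when `L i j < 0`),
zero is a simple eigenvalue (algebraic multiplicity one, i.e. root multiplicity
one of the characteristic polynomial) iff the graph has a directed spanning
tree, i.e. some root has a directed path to every node. -/
theorem stmt1 {N : ℕ} (L : Matrix (Fin N) (Fin N) ℝ)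
    (hrow : ∀ i, ∑ j, L i j = 0)
    (hoff : ∀ i j, i ≠ j → L i j ≤ 0) :
    L.charpoly.rootMultiplicity 0 = 1 ↔
      ∃ r : Fin N, ∀ j : Fin N,
        Relation.ReflTransGen (fun a b => a ≠ b ∧ L b a < 0) r j := by
  classical
  cases N with
  | zero =>
    constructor
    · intro h
      exfalso
      have hc : L.charpoly = 1 := Matrix.det_isEmpty
      rw [hc] at h
      rw [Polynomial.rootMultiplicity_eq_zero (by simp [Polynomial.IsRoot])] at h
      exact one_ne_zero h.symm
    · rintro ⟨r, -⟩
      exact r.elim0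
  | succ n =>
    have hfac := Stmt1Aux.charpoly_factor L hrow
    set q := (Stmt1Aux.redM L).charpoly with hq
    have hqne : q ≠ 0 := (Matrix.charpoly_monic _).ne_zero
    have hXq : (Polynomial.X : Polynomial ℝ) * q ≠ 0 :=
      mul_ne_zero Polynomial.X_ne_zero hqne
    have hmult : L.charpoly.rootMultiplicity 0 = 1 + q.rootMultiplicity 0 := by
      rw [hfac, Polynomial.rootMultiplicity_mul hXq]
      congr 1
      simpa using Polynomial.rootMultiplicity_X_sub_C_self (x := (0 : ℝ))
    have hdetiff : L.charpoly.rootMultiplicity 0 = 1 ↔ (Stmt1Aux.redM L).det ≠ 0 := by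
      rw [hmult]
      constructor
      · intro h
        have h0 : q.rootMultiplicity 0 = 0 := by omega
        have hnr : ¬ q.IsRoot 0 := by
          intro hr
          exact hqne (Polynomial.rootMultiplicity_eq_zero_iff.mp h0 hr)
        intro hd
        apply hnr
        have := Matrix.det_eq_sign_charpoly_coeff (Stmt1Aux.redM L)
        rw [hd] at this
        have hc0 : q.coeff 0 = 0 := by
          rcases mul_eq_zero.mp this.symm with hc | hc
          · exact absurd hc (by positivity)
          · exact hc
        rwa [Polynomial.IsRoot, ← Polynomial.coeff_zero_eq_eval_zero]
      · intro hd
        have hnr : ¬ q.IsRoot 0 := by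
          intro hr
          apply hd
          rw [Matrix.det_eq_sign_charpoly_coeff (Stmt1Aux.redM L)]
          rw [Polynomial.coeff_zero_eq_eval_zero, hr, mul_zero]
        rw [Polynomial.rootMultiplicity_eq_zero hnr]
    rw [hdetiff]
    constructor
    · intro hd
      by_contra hne
      exact hd (Stmt1Aux.det_redM_eq_zero L hrow hoff hne)
    · rintro ⟨r, hr⟩
      exact Stmt1Aux.det_redM_ne_zero L hrow hoff r hr
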